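/- Pointwise differential inequality: for a kernel K with 0 < c_K ≤ K(k,l) ≤ C_K for all k,l, and any nonnegative g ∈ ℓ¹(ℤ), the collision operator satisfies Q(g)(k) ≥ c_K m(g) g(k−1) − 2 C_K m(g) g(k) for all k ∈ ℤ, where m(g) = ∑_l g(l). -/

import Mathlib

open scoped BigOperators

/-- The charge-exchange collision operator. -/
noncomputable def Qop (K : ℤ → ℤ → ℝ) (f g : ℤ → ℝ) (k : ℤ) : ℝ :=
  ∑' l : ℤ, (K l (k - 1) * g l * f (k - 1) - K k (l - 1) * f k * g (l - 1)
      - K l k * g l * f k + K (k + 1) (l - 1) * f (k + 1) * g (l - 1))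

theorem pointwise_lower_bound_for_Q (K : ℤ → ℤ → ℝ) (cK CK : ℝ) (hcK : 0 < cK)
    (hKlow : ∀ k l, cK ≤ K k l) (hKb : ∀ k l, K k l ≤ CK)
    (g : ℤ → ℝ) (hg0 : ∀ k, 0 ≤ g k) (hg : Summable g) :
    ∀ k : ℤ, cK * (∑' l : ℤ, g l) * g (k - 1) - 2 * CK * (∑' l : ℤ, g l) * g k ≤
      Qop K g g k := by
  intro k
  have hK0 : ∀ a b, (0:ℝ) ≤ K a b := fun a b => le_trans hcK.le (hKlow a b)
  have hCK0 : (0:ℝ) ≤ CK := le_trans (hK0 0 0) (hKb 0 0)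
  have hgs : Summable (fun l : ℤ => g (l - 1)) := by
    simpa [Function.comp_def] using (Equiv.subRight (1:ℤ)).summable_iff.mpr hg
  have htgs : (∑' l : ℤ, g (l - 1)) = ∑' l : ℤ, g l := by
    simpa using (Equiv.subRight (1:ℤ)).tsum_eq g
  have hA : Summable (fun l : ℤ => K l (k - 1) * g l * g (k - 1)) := by
    refine Summable.of_nonneg_of_le (fun l => mul_nonneg (mul_nonneg (hK0 _ _) (hg0 _)) (hg0 _)) (fun l => ?_)
      ((hg.mul_left CK).mul_right (g (k - 1)))
    exact mul_le_mul_of_nonneg_right (mul_le_mul_of_nonneg_right (hKb _ _) (hg0 l)) (hg0 _)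
  have hB : Summable (fun l : ℤ => K k (l - 1) * g k * g (l - 1)) := by
    refine Summable.of_nonneg_of_le (fun l => mul_nonneg (mul_nonneg (hK0 _ _) (hg0 _)) (hg0 _)) (fun l => ?_)
      (hgs.mul_left (CK * g k))
    calc K k (l - 1) * g k * g (l - 1) ≤ CK * g k * g (l - 1) :=
          mul_le_mul_of_nonneg_right (mul_le_mul_of_nonneg_right (hKb _ _) (hg0 k)) (hg0 _)
      _ = CK * g k * g (l - 1) := rfl
  have hC : Summable (fun l : ℤ => K l k * g l * g k) := by
    refine Summable.of_nonneg_of_le (fun l => mul_nonneg (mul_nonneg (hK0 _ _) (hg0 _)) (hg0 _)) (fun l => ?_)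
      ((hg.mul_left CK).mul_right (g k))
    exact mul_le_mul_of_nonneg_right (mul_le_mul_of_nonneg_right (hKb _ _) (hg0 l)) (hg0 _)
  have hD : Summable (fun l : ℤ => K (k + 1) (l - 1) * g (k + 1) * g (l - 1)) := by
    refine Summable.of_nonneg_of_le (fun l => mul_nonneg (mul_nonneg (hK0 _ _) (hg0 _)) (hg0 _)) (fun l => ?_)
      (hgs.mul_left (CK * g (k + 1)))
    exact mul_le_mul_of_nonneg_right (mul_le_mul_of_nonneg_right (hKb _ _) (hg0 _)) (hg0 _)
  have hF : Summable (fun l : ℤ => K l (k - 1) * g l * g (k - 1) - K k (l - 1) * g k * g (l - 1)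
      - K l k * g l * g k + K (k + 1) (l - 1) * g (k + 1) * g (l - 1)) :=
    ((hA.sub hB).sub hC).add hD
  have hL : Summable (fun l : ℤ => cK * g l * g (k - 1) - CK * g k * g (l - 1)
      - CK * g l * g k) := by
    refine Summable.sub (Summable.sub ?_ ?_) ?_
    · simpa [mul_assoc] using (hg.mul_left cK).mul_right (g (k - 1))
    · simpa [mul_assoc] using hgs.mul_left (CK * g k)
    · simpa [mul_assoc] using (hg.mul_left CK).mul_right (g k)
  have hle : (∑' l : ℤ, (cK * g l * g (k - 1) - CK * g k * g (l - 1) - CK * g l * g k)) ≤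
      Qop K g g k := by
    refine Summable.tsum_le_tsum (fun l => ?_) hL hF
    have h1 : cK * g l * g (k - 1) ≤ K l (k - 1) * g l * g (k - 1) :=
      mul_le_mul_of_nonneg_right (mul_le_mul_of_nonneg_right (hKlow _ _) (hg0 l)) (hg0 _)
    have h2 : K k (l - 1) * g k * g (l - 1) ≤ CK * g k * g (l - 1) :=
      mul_le_mul_of_nonneg_right (mul_le_mul_of_nonneg_right (hKb _ _) (hg0 k)) (hg0 _)
    have h3 : K l k * g l * g k ≤ CK * g l * g k :=
      mul_le_mul_of_nonneg_right (mul_le_mul_of_nonneg_right (hKb _ _) (hg0 l)) (hg0 _)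
    have h4 : 0 ≤ K (k + 1) (l - 1) * g (k + 1) * g (l - 1) := mul_nonneg (mul_nonneg (hK0 _ _) (hg0 _)) (hg0 _)
    linarith
  have hsplit : (∑' l : ℤ, (cK * g l * g (k - 1) - CK * g k * g (l - 1) - CK * g l * g k)) =
      cK * (∑' l : ℤ, g l) * g (k - 1) - CK * g k * (∑' l : ℤ, g l)
        - CK * (∑' l : ℤ, g l) * g k := by
    have e1 : Summable (fun l : ℤ => cK * g l * g (k - 1)) := by
      simpa [mul_assoc] using (hg.mul_left cK).mul_right (g (k - 1))
    have e2 : Summable (fun l : ℤ => CK * g k * g (l - 1)) := hgs.mul_left (CK * g k)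
    have e3 : Summable (fun l : ℤ => CK * g l * g k) := by
      simpa [mul_assoc] using (hg.mul_left CK).mul_right (g k)
    rw [Summable.tsum_sub (e1.sub e2) e3, Summable.tsum_sub e1 e2]
    have t1 : (∑' l : ℤ, cK * g l * g (k - 1)) = cK * (∑' l : ℤ, g l) * g (k - 1) := by
      rw [tsum_mul_right, tsum_mul_left]
    have t2 : (∑' l : ℤ, CK * g k * g (l - 1)) = CK * g k * (∑' l : ℤ, g l) := by
      rw [tsum_mul_left, htgs]
    have t3 : (∑' l : ℤ, CK * g l * g k) = CK * (∑' l : ℤ, g l) * g k := by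
      rw [tsum_mul_right, tsum_mul_left]
    rw [t1, t2, t3]
  have hm : 0 ≤ ∑' l : ℤ, g l := tsum_nonneg hg0
  rw [hsplit] at hle
  nlinarith [hle]
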